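/- Let d ≥ 2 and J = (1/(d(d−1))) Σ_{i≠j} E_{ii} ⊗ E_{jj} on ℂ^d ⊗ ℂ^d. If X is a Hermitian d×d matrix such that J − I_d ⊗ X is block-positive, i.e. ⟨u ⊗ v, (J − I_d ⊗ X)(u ⊗ v)⟩ ≥ 0 for all u, v ∈ ℂ^d, then tr(X) ≤ 0. Consequently sup { tr(X) : X Hermitian, J − I_d ⊗ X block-positive } = 0 (the induced Doeblin coefficient of the corresponding channel vanishes). -/

import Mathlib

open Matrix Kronecker BigOperators
open scoped ComplexOrder

noncomputable section

/-- The trace norm (sum of singular values) of a complex matrix: `tr √(AᴴA)`. -/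
def traceNorm {m n : Type*} [Fintype m] [Fintype n] [DecidableEq n] (A : Matrix m n ℂ) : ℝ :=
  ((Matrix.posSemidef_conjTranspose_mul_self A).1.eigenvectorUnitary.1 *
    diagonal (((↑) : ℝ → ℂ) ∘ (√·) ∘ (Matrix.posSemidef_conjTranspose_mul_self A).1.eigenvalues) *
    (star (Matrix.posSemidef_conjTranspose_mul_self A).1.eigenvectorUnitary : Matrix n n ℂ)).trace.re

/-- A density matrix: positive semidefinite with trace one. -/
def IsDensity {n : Type*} [Fintype n] [DecidableEq n] (ρ : Matrix n n ℂ) : Prop :=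
  ρ.PosSemidef ∧ ρ.trace = 1

/-- Trace norm contraction coefficient of a map on matrices. -/
def etaTr {dA dB : ℕ} (Φ : Matrix (Fin dA) (Fin dA) ℂ → Matrix (Fin dB) (Fin dB) ℂ) : ℝ :=
  sSup {r : ℝ | ∃ ρ σ : Matrix (Fin dA) (Fin dA) ℂ, IsDensity ρ ∧ IsDensity σ ∧ ρ ≠ σ ∧
    r = traceNorm (Φ ρ - Φ σ) / traceNorm (ρ - σ)}

/-- Optimal success probability for transmitting one of `k` messages through `Φ`. -/
def Psucc {dA dB : ℕ} (Φ : Matrix (Fin dA) (Fin dA) ℂ → Matrix (Fin dB) (Fin dB) ℂ)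
    (k : ℕ) : ℝ :=
  sSup {r : ℝ | ∃ (M : Fin k → Matrix (Fin dB) (Fin dB) ℂ)
      (ρ : Fin k → Matrix (Fin dA) (Fin dA) ℂ),
    (∀ i, (M i).PosSemidef) ∧ (∑ i, M i = 1) ∧ (∀ i, IsDensity (ρ i)) ∧
    r = (1 / (k : ℝ)) * ∑ i, ((M i * Φ (ρ i)).trace).re}

/-- The Euclidean (ℓ₂) norm of a complex vector. -/
def l2norm {n : Type*} [Fintype n] (v : n → ℂ) : ℝ :=
  Real.sqrt (∑ i, ‖v i‖ ^ 2)

/-- Choi state of a map on matrices: `(1/dA) ∑ᵢⱼ Eᵢⱼ ⊗ Φ(Eᵢⱼ)`. -/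
def choi {dA dB : ℕ} (Φ : Matrix (Fin dA) (Fin dA) ℂ → Matrix (Fin dB) (Fin dB) ℂ) :
    Matrix (Fin dA × Fin dB) (Fin dA × Fin dB) ℂ :=
  (dA : ℂ)⁻¹ • ∑ i : Fin dA, ∑ j : Fin dA,
    (Matrix.single i j (1 : ℂ)) ⊗ₖ (Φ (Matrix.single i j (1 : ℂ)))

/-- The matrix `J = (1/(d(d−1))) ∑_{i≠j} E_{ii} ⊗ E_{jj}` on `ℂ^d ⊗ ℂ^d`. -/
def Jmat (d : ℕ) : Matrix (Fin d × Fin d) (Fin d × Fin d) ℂ :=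
  ((d : ℂ) * ((d : ℂ) - 1))⁻¹ •
    ∑ p ∈ Finset.univ.filter (fun p : Fin d × Fin d => p.1 ≠ p.2),
      Matrix.single p.1 p.1 (1 : ℂ) ⊗ₖ Matrix.single p.2 p.2 (1 : ℂ)

/-- An operator on `ℂ^d ⊗ ℂ^d` is block-positive if `⟨u⊗v, A(u⊗v)⟩ ≥ 0` for all `u, v`. -/
def BlockPositive {d : ℕ} (A : Matrix (Fin d × Fin d) (Fin d × Fin d) ℂ) : Prop :=
  ∀ u v : Fin d → ℂ,
    0 ≤ (star (fun p : Fin d × Fin d => u p.1 * v p.2) ⬝ᵥ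
      A.mulVec (fun p : Fin d × Fin d => u p.1 * v p.2)).re

lemma Jmat_apply {d : ℕ} (p q : Fin d × Fin d) :
    Jmat d p q = ((d:ℂ)*((d:ℂ)-1))⁻¹ * (if p = q ∧ p.1 ≠ p.2 then 1 else 0) := by
  simp only [Jmat, Matrix.smul_apply, Matrix.sum_apply, Matrix.kroneckerMap_apply,
    Matrix.single, Matrix.of_apply, smul_eq_mul]
  congr 1
  rcases eq_or_ne p q with rfl | h
  · have : ∀ x : Fin d × Fin d,
        ((if x.1 = p.1 ∧ x.1 = p.1 then (1:ℂ) else 0) * if x.2 = p.2 ∧ x.2 = p.2 then 1 else 0)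
          = if x = p then 1 else 0 := by
      intro x
      by_cases h1 : x = p
      · subst h1; simp
      · rw [if_neg h1]
        rcases (not_and_or.1 (fun hc => h1 (Prod.ext_iff.2 hc))) with h2 | h2 <;> simp [h2]
    rw [Finset.sum_congr rfl fun x _ => this x, Finset.sum_ite_eq' ]
    simp
  · rw [if_neg (by tauto)]
    refine Finset.sum_eq_zero fun x hx => ?_
    by_cases h1 : x.1 = p.1 ∧ x.1 = q.1
    · by_cases h2 : x.2 = p.2 ∧ x.2 = q.2
      · exact absurd (Prod.ext_iff.2 ⟨h1.1.symm.trans h1.2, h2.1.symm.trans h2.2⟩) h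
      · simp [h2]
    · simp [h1]

lemma diag_nonpos {d : ℕ} (X : Matrix (Fin d) (Fin d) ℂ)
    (hbp : BlockPositive (Jmat d - (1 : Matrix (Fin d) (Fin d) ℂ) ⊗ₖ X)) (i : Fin d) :
    (X i i).re ≤ 0 := by
  have h := hbp (Pi.single i 1) (Pi.single i 1)
  have hw : (fun p : Fin d × Fin d => (Pi.single i (1:ℂ) : Fin d → ℂ) p.1 * (Pi.single i (1:ℂ) : Fin d → ℂ) p.2)
      = (Pi.single (i, i) (1:ℂ) : Fin d × Fin d → ℂ) := by
    funext p
    by_cases h1 : p.1 = i <;> by_cases h2 : p.2 = i <;>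
      simp [Pi.single_apply, h1, h2, Prod.ext_iff]
  rw [hw] at h
  have hs : star (Pi.single (i,i) (1:ℂ) : Fin d × Fin d → ℂ) = (Pi.single (i,i) (1:ℂ) : Fin d × Fin d → ℂ) := by
    funext p; by_cases h1 : p = (i,i) <;> simp [Pi.single_apply, h1]
  rw [hs, Matrix.mulVec_single, single_dotProduct] at h
  simp only [one_mul, mul_one, Matrix.sub_apply, Jmat_apply, Matrix.kroneckerMap_apply,
    Matrix.one_apply_eq, ne_eq, not_true_eq_false, and_false, if_false, mul_zero,
    zero_sub, one_mul] at h
  simpa [Jmat_apply] using h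

lemma bp_Jmat {d : ℕ} (hd : 2 ≤ d) : BlockPositive (Jmat d) := by
  intro u v
  set w : Fin d × Fin d → ℂ := fun p => u p.1 * v p.2 with hwdef
  have hmv : (Jmat d).mulVec w
      = fun p => ((d:ℂ)*((d:ℂ)-1))⁻¹ * (if p.1 ≠ p.2 then w p else 0) := by
    funext p
    simp only [Matrix.mulVec, dotProduct, Jmat_apply]
    by_cases hp : p.1 = p.2
    · simp [hp]
    · simp [hp, mul_ite, ite_mul, mul_zero, zero_mul, Finset.sum_ite_eq]
  rw [hmv]
  have hre : (star w ⬝ᵥ fun p => ((d:ℂ)*((d:ℂ)-1))⁻¹ * (if p.1 ≠ p.2 then w p else 0)).re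
      = ∑ p : Fin d × Fin d,
        ((starRingEnd ℂ) (w p) * (((d:ℂ)*((d:ℂ)-1))⁻¹ * (if p.1 ≠ p.2 then w p else 0))).re := by
    simp [dotProduct, Complex.re_sum]
  rw [hre]
  refine Finset.sum_nonneg fun p _ => ?_
  by_cases hp : p.1 = p.2
  · simp [hp]
  · rw [if_pos hp]
    have hc : ((d:ℂ)*((d:ℂ)-1))⁻¹ = ((((d:ℝ)*((d:ℝ)-1))⁻¹ : ℝ) : ℂ) := by push_cast; ring
    have : (starRingEnd ℂ) (w p) * (((d:ℂ)*((d:ℂ)-1))⁻¹ * w p)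
        = (((((d:ℝ)*((d:ℝ)-1))⁻¹ * Complex.normSq (w p) : ℝ)) : ℂ) := by
      rw [hc, show (starRingEnd ℂ) (w p) * (((((d:ℝ)*((d:ℝ)-1))⁻¹ : ℝ) : ℂ) * w p)
          = (((((d:ℝ)*((d:ℝ)-1))⁻¹ : ℝ) : ℂ)) * (w p * (starRingEnd ℂ) (w p)) by ring,
        Complex.mul_conj]
      push_cast
      ring
    rw [this, Complex.ofReal_re]
    have h1 : (1:ℝ) ≤ (d:ℝ) := by exact_mod_cast le_trans (by norm_num) hd
    exact mul_nonneg (inv_nonneg.2 (mul_nonneg (by positivity) (by linarith)))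
      (Complex.normSq_nonneg _)


/-- for `d ≥ 2`, every Hermitian `X` with `J − I ⊗ X` block-positive has
`tr(X) ≤ 0`; consequently the induced Doeblin coefficient vanishes. -/
theorem induced_doeblin_coefficient_vanishes {d : ℕ} (hd : 2 ≤ d) :
    (∀ X : Matrix (Fin d) (Fin d) ℂ, X.IsHermitian →
      BlockPositive (Jmat d - (1 : Matrix (Fin d) (Fin d) ℂ) ⊗ₖ X) →
      X.trace.re ≤ 0) ∧
    sSup {r : ℝ | ∃ X : Matrix (Fin d) (Fin d) ℂ, X.IsHermitian ∧
      BlockPositive (Jmat d - (1 : Matrix (Fin d) (Fin d) ℂ) ⊗ₖ X) ∧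
      r = X.trace.re} = 0 := by
  have part1 : ∀ X : Matrix (Fin d) (Fin d) ℂ, X.IsHermitian →
      BlockPositive (Jmat d - (1 : Matrix (Fin d) (Fin d) ℂ) ⊗ₖ X) →
      X.trace.re ≤ 0 := by
    intro X _ hbp
    have ht : X.trace.re = ∑ i, (X i i).re := by
      simp [Matrix.trace, Matrix.diag, Complex.re_sum]
    rw [ht]
    exact Finset.sum_nonpos fun i _ => diag_nonpos X hbp i
  refine ⟨part1, ?_⟩
  have h0 : (0:ℝ) ∈ {r : ℝ | ∃ X : Matrix (Fin d) (Fin d) ℂ, X.IsHermitian ∧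
      BlockPositive (Jmat d - (1 : Matrix (Fin d) (Fin d) ℂ) ⊗ₖ X) ∧
      r = X.trace.re} := by
    refine ⟨0, Matrix.isHermitian_zero, ?_, by simp [Matrix.trace]⟩
    rw [Matrix.kronecker_zero, sub_zero]
    exact bp_Jmat hd
  apply le_antisymm
  · refine Real.sSup_le (fun r hr => ?_) le_rfl
    obtain ⟨X, h1, h2, rfl⟩ := hr
    exact part1 X h1 h2
  · refine le_csSup ⟨0, fun r hr => ?_⟩ h0
    obtain ⟨X, h1, h2, rfl⟩ := hr
    exact part1 X h1 h2
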